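/- Every convex-Gaussian state ρ on ℂ^N has an n-Gaussian-symmetric extension for every n ≥ 1; explicitly, if ρ = Σ_i p_i |ψ_i⟩⟨ψ_i| with pure Gaussian states |ψ_i⟩⟨ψ_i|, probabilities p_i ≥ 0 and Σ_i p_i = 1, then ρ^{(n)} = Σ_i p_i (|ψ_i⟩⟨ψ_i|)^{⊗n} is an n-Gaussian-symmetric extension of ρ. -/

import Mathlib

open Matrix Kronecker Finset
open scoped ComplexOrder

noncomputable section

/-- A Majorana family: `2*m` Hermitian `2^m × 2^m` complex matrices squaring to the
identity and pairwise anticommuting. -/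
structure MajoranaFamily (m : ℕ) where
  c : Fin (2*m) → Matrix (Fin (2^m)) (Fin (2^m)) ℂ
  herm : ∀ j, (c j).IsHermitian
  sq : ∀ j, c j * c j = 1
  anticomm : ∀ j k, j ≠ k → c j * c k = -(c k * c j)

abbrev Mat (m : ℕ) := Matrix (Fin (2^m)) (Fin (2^m)) ℂ
abbrev Mat2 (m : ℕ) := Matrix (Fin (2^m) × Fin (2^m)) (Fin (2^m) × Fin (2^m)) ℂ
abbrev MatN (m n : ℕ) := Matrix (Fin n → Fin (2^m)) (Fin n → Fin (2^m)) ℂ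

variable {m : ℕ}

/-- A state: a positive semidefinite matrix of trace `1`. -/
def IsState {ι : Type*} [Fintype ι] (ρ : Matrix ι ι ℂ) : Prop :=
  ρ.PosSemidef ∧ ρ.trace = 1

/-- The square root of a positive semidefinite matrix (the Mathlib definition of
December 2024, since removed from Mathlib). -/
def Matrix.PosSemidef.sqrt {n : Type*} [Fintype n] [DecidableEq n] {A : Matrix n n ℂ}
    (hA : A.PosSemidef) : Matrix n n ℂ :=
  (hA.1.eigenvectorUnitary : Matrix n n ℂ) * diagonal ((↑) ∘ Real.sqrt ∘ hA.1.eigenvalues) *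
    (star hA.1.eigenvectorUnitary : Matrix n n ℂ)

/-- The trace norm `‖X‖₁ = Tr √(XᴴX)`. -/
def traceNorm {ι : Type*} [Fintype ι] [DecidableEq ι] (X : Matrix ι ι ℂ) : ℝ :=
  ((Matrix.posSemidef_conjTranspose_mul_self X).sqrt.trace).re

/-- The rotated Majorana operators `c̃_j = Σ_i R_{ij} c_i`. -/
def tilde (F : MajoranaFamily m) (R : Matrix (Fin (2*m)) (Fin (2*m)) ℝ)
    (j : Fin (2*m)) : Mat m :=
  ∑ i, (R i j : ℂ) • F.c i

/-- Standard-form Gaussian state `2^{-m} ∏_{k=1}^m (I + i λ_k c̃_{2k-1} c̃_{2k})`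
(ordered product; the factors commute). -/
def gaussStd (F : MajoranaFamily m) (R : Matrix (Fin (2*m)) (Fin (2*m)) ℝ)
    (lam : Fin m → ℝ) : Mat m :=
  ((2:ℂ)^m)⁻¹ • (List.ofFn (fun k : Fin m =>
    (1 : Mat m) + (Complex.I * (lam k : ℂ)) •
      (tilde F R ⟨2*k.val, by omega⟩ * tilde F R ⟨2*k.val+1, by omega⟩))).prod

/-- A pure Gaussian state: a standard-form Gaussian state with all `λ_k ∈ {-1,1}`,
for some `R ∈ SO(2m,ℝ)`. -/
def IsPureGaussian (F : MajoranaFamily m) (ρ : Mat m) : Prop :=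
  ∃ (R : Matrix (Fin (2*m)) (Fin (2*m)) ℝ) (lam : Fin m → ℝ),
    Rᵀ * R = 1 ∧ R.det = 1 ∧ (∀ k, lam k = 1 ∨ lam k = -1) ∧ ρ = gaussStd F R lam

/-- A convex-Gaussian state: a finite convex combination of pure Gaussian states. -/
def IsConvexGaussian (F : MajoranaFamily m) (ρ : Mat m) : Prop :=
  ∃ (k : ℕ) (p : Fin k → ℝ) (g : Fin k → Mat m),
    (∀ i, 0 ≤ p i) ∧ (∑ i, p i) = 1 ∧ (∀ i, IsPureGaussian F (g i)) ∧
    ρ = ∑ i, p i • g i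

/-- `Λ = Σ_j c_j ⊗ c_j` on `ℂ^N ⊗ ℂ^N`. -/
def Lambda (F : MajoranaFamily m) : Mat2 m := ∑ j, F.c j ⊗ₖ F.c j

/-- Ordered product `c_{a_1} ⋯ c_{a_r}` over a finite set `S = {a_1 < … < a_r}`. -/
def majProd (F : MajoranaFamily m) (S : Finset (Fin (2*m))) : Mat m :=
  ((S.sort (· ≤ ·)).map F.c).prod

/-- An even operator: a complex linear combination of the identity and products of
an even number of distinct Majorana operators. -/
def IsEven (F : MajoranaFamily m) (X : Mat m) : Prop :=
  X ∈ Submodule.span ℂ {Y : Mat m | ∃ S : Finset (Fin (2*m)), Even S.card ∧ Y = majProd F S}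

/-- The Hermitian correlator `i^k c_{a_1} ⋯ c_{a_{2k}}` associated to a set of
cardinality `2k`. -/
def corrOp (F : MajoranaFamily m) (S : Finset (Fin (2*m))) : Mat m :=
  (Complex.I ^ (S.card / 2)) • majProd F S

/-- The operator acting as `A` on the `k`-th tensor factor of `(ℂ^N)^{⊗n}` and as the
identity on the other factors. -/
def embedAt (n : ℕ) (k : Fin n) (A : Mat m) : MatN m n :=
  fun x y => A (x k) (y k) * ∏ l ∈ Finset.univ.erase k, (if x l = y l then 1 else 0)

/-- `Λ^{k,l} = Σ_j c_j^{(k)} c_j^{(l)}` on `(ℂ^N)^{⊗n}`. -/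
def LambdaKL (F : MajoranaFamily m) (n : ℕ) (k l : Fin n) : MatN m n :=
  ∑ j, embedAt n k (F.c j) * embedAt n l (F.c j)

/-- Partial trace of an operator on `(ℂ^N)^{⊗n}` over the tensor factors `2, …, n`. -/
def ptrRest (n : ℕ) (hn : 1 ≤ n) (ρ : MatN m n) : Mat m := fun a b =>
  ∑ g : Fin (n-1) → Fin (2^m),
    ρ (fun i => if h : i.val = 0 then a else g ⟨i.val - 1, by omega⟩)
      (fun i => if h : i.val = 0 then b else g ⟨i.val - 1, by omega⟩)

/-- `ρ` has an `n`-Gaussian-symmetric extension. -/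
def HasGSExt (F : MajoranaFamily m) (n : ℕ) (hn : 1 ≤ n) (ρ : Mat m) : Prop :=
  ∃ ext : MatN m n, IsState ext ∧ ptrRest n hn ext = ρ ∧
    ∀ k l : Fin n, k ≠ l → LambdaKL F n k l * ext = 0

/-- `‖Λ‖₁ = 2(m+1) C(2m, m+1)`. -/
def lambdaNorm (m : ℕ) : ℝ := 2*(m+1) * (Nat.choose (2*m) (m+1) : ℝ)

/-- `ε(n) = min {2, 10 ‖Λ‖₁² 2^{2m} n^{-1/3}}`. -/
def epsB (m n : ℕ) : ℝ :=
  min 2 (10 * lambdaNorm m ^ 2 * 2^(2*m) / (n:ℝ) ^ ((1:ℝ)/3))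

/-- `χ(n) = (ε(n)/2) (2m)!/m!`. -/
def chiB (m n : ℕ) : ℝ :=
  epsB m n / 2 * ((Nat.factorial (2*m) : ℝ) / (Nat.factorial m : ℝ))

/-- `δ(n) = χ(n)/(1+χ(n))`. -/
def deltaB (m n : ℕ) : ℝ := chiB m n / (1 + chiB m n)

/-- The parity operator `P = i^m c_1 ⋯ c_{2m}`. -/
def parityOp (F : MajoranaFamily m) : Mat m :=
  (Complex.I ^ m) • (((List.finRange (2*m)).map F.c).prod)

/-- The operator `I^{⊗ r} ⊗ c_s ⊗ P^{⊗(n-r-1)}` on `(ℂ^N)^{⊗n}` (0-based position `r`). -/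
def dOp (F : MajoranaFamily m) (n : ℕ) (r : Fin n) (s : Fin (2*m)) : MatN m n :=
  fun x y => ∏ l : Fin n,
    if l < r then (if x l = y l then 1 else 0)
    else if l = r then F.c s (x l) (y l)
    else parityOp F (x l) (y l)

/-- The family `d_1, …, d_{2mn}`, where `d_{2m(r-1)+s} = I^{⊗(r-1)} ⊗ c_s ⊗ P^{⊗(n-r)}`. -/
def dAll (hm : 1 ≤ m) (F : MajoranaFamily m) (n : ℕ) (j : Fin (2*(m*n))) : MatN m n :=
  dOp F n
    ⟨j.val / (2*m), by
      have h1 := j.isLt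
      rw [Nat.div_lt_iff_lt_mul (by omega)]
      have h2 : n * (2*m) = 2*(m*n) := by ring
      omega⟩
    ⟨j.val % (2*m), Nat.mod_lt _ (by omega)⟩

/-- The index `2m(k-1)+j` (0-based: `2mk + j`) into a family of `2mn` Majorana operators. -/
def bigIdx (m n : ℕ) (k : Fin n) (j : Fin (2*m)) : Fin (2*(m*n)) :=
  ⟨2*m*k.val + j.val, by
    have hk : k.val + 1 ≤ n := k.isLt
    have hj := j.isLt
    have h1 : 2*m*(k.val+1) = 2*m*k.val + 2*m := by ring
    have h2 : 2*m*(k.val+1) ≤ 2*m*n := Nat.mul_le_mul le_rfl hk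
    have h3 : 2*m*n = 2*(m*n) := by ring
    omega⟩

/-- `Γ^{k,l} = Σ_{j=1}^{2m} (-1)^{m-j} e_{2m(k-1)+j} · e_{2m(l-1)+1} ⋯ ê_{2m(l-1)+j} ⋯ e_{2ml}`. -/
def GammaKL (m n : ℕ) (E : MajoranaFamily (m*n)) (k l : Fin n) :
    Matrix (Fin (2^(m*n))) (Fin (2^(m*n))) ℂ :=
  ∑ j : Fin (2*m), ((-1:ℂ) ^ ((m:ℤ) - (j.val+1 : ℤ))) •
    (E.c (bigIdx m n k j) *
      (((List.finRange (2*m)).filter (fun i => i ≠ j)).map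
        (fun i => E.c (bigIdx m n l i))).prod)

/-- `C = i^{mn} e_1 ⋯ e_{2mn}`. -/
def bigParity (m n : ℕ) (E : MajoranaFamily (m*n)) :
    Matrix (Fin (2^(m*n))) (Fin (2^(m*n))) ℂ :=
  (Complex.I ^ (m*n)) • (((List.finRange (2*(m*n))).map E.c).prod)

/-- The `n`-fold tensor power `A^{⊗n}` of a matrix on `ℂ^N`. -/
def tpow (n : ℕ) (A : Mat m) : MatN m n := fun x y => ∏ k, A (x k) (y k)



lemma maj_anti (F : MajoranaFamily m) (j k : Fin (2*m)) :
    F.c j * F.c k + F.c k * F.c j = if j = k then (2:ℂ) • 1 else 0 := by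
  by_cases h : j = k
  · subst h; simp [F.sq, two_smul]
  · simp [h, F.anticomm j k h]

lemma combo_mul (F : MajoranaFamily m) (r s : Fin (2*m) → ℝ) :
    (∑ i, (r i : ℂ) • F.c i) * (∑ i, (s i : ℂ) • F.c i) +
      (∑ i, (s i : ℂ) • F.c i) * (∑ i, (r i : ℂ) • F.c i)
      = ((∑ i, (r i : ℝ) * s i : ℝ) : ℂ) • ((2:ℂ) • 1) := by
  rw [Finset.sum_mul_sum, Finset.sum_mul_sum]
  simp only [smul_mul_smul_comm]
  rw [show (∑ i, ∑ j, ((s i : ℂ) * r j) • (F.c i * F.c j))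
      = ∑ i, ∑ j, ((s j : ℂ) * r i) • (F.c j * F.c i) from Finset.sum_comm]
  rw [← Finset.sum_add_distrib]
  have : ∀ i, (∑ j, ((r i : ℂ) * s j) • (F.c i * F.c j))
      + (∑ j, ((s j : ℂ) * r i) • (F.c j * F.c i))
      = ∑ j, ((r i : ℂ) * s j) • (F.c i * F.c j + F.c j * F.c i) := by
    intro i
    rw [← Finset.sum_add_distrib]
    congr 1; funext j
    rw [smul_add, mul_comm (s j : ℂ)]
  simp only [this, maj_anti]
  simp only [smul_ite, smul_zero, Finset.sum_ite_eq, mem_univ, if_true]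
  rw [Complex.ofReal_sum]
  push_cast
  rw [Finset.sum_smul]

/-- The tilde family: rotation of a Majorana family by an orthogonal matrix. -/
def tildeFamily (F : MajoranaFamily m) (R : Matrix (Fin (2*m)) (Fin (2*m)) ℝ)
    (hR : Rᵀ * R = 1) : MajoranaFamily m where
  c j := ∑ i, (R i j : ℂ) • F.c i
  herm j := by
    unfold Matrix.IsHermitian
    rw [conjTranspose_sum]
    congr 1; funext i
    rw [conjTranspose_smul, (F.herm i).eq]
    norm_num
  sq j := by
    have h := combo_mul F (fun i => R i j) (fun i => R i j)
    have hd : ∑ i, R i j * R i j = 1 := by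
      have := congrFun (congrFun hR j) j
      simpa [Matrix.mul_apply, Matrix.one_apply, Matrix.transpose_apply] using this
    rw [hd] at h
    simp only [Complex.ofReal_one, one_smul] at h
    have h2 : (2:ℂ) • ((∑ i, (R i j : ℂ) • F.c i) * (∑ i, (R i j : ℂ) • F.c i))
        = (2:ℂ) • (1 : Mat m) := by
      conv_lhs => rw [two_smul]
      exact h
    exact smul_right_injective (Mat m) (two_ne_zero) h2
  anticomm j k hjk := by
    have h := combo_mul F (fun i => R i j) (fun i => R i k)
    have hd : ∑ i, R i j * R i k = 0 := by
      have := congrFun (congrFun hR j) k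
      simpa [Matrix.mul_apply, Matrix.one_apply, Matrix.transpose_apply, hjk] using this
    rw [hd] at h
    simp only [Complex.ofReal_zero, zero_smul] at h
    exact eq_neg_of_add_eq_zero_left h

section Pairs

variable (G : MajoranaFamily m) (lam : Fin m → ℝ)

/-- index 2k -/
def i0 (k : Fin m) : Fin (2*m) := ⟨2*k.val, by omega⟩
/-- index 2k+1 -/
def i1 (k : Fin m) : Fin (2*m) := ⟨2*k.val+1, by have := k.isLt; omega⟩

def pA (k : Fin m) : Mat m := (Complex.I * (lam k : ℂ)) • (G.c (i0 k) * G.c (i1 k))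

def fA (k : Fin m) : Mat m := 1 + pA G lam k

lemma i0_ne_i1 (k l : Fin m) : i0 k ≠ i1 l := by
  simp only [i0, i1, ne_eq, Fin.mk.injEq]; omega

lemma i0_inj {k l : Fin m} (h : k ≠ l) : i0 k ≠ i0 l := by
  simp only [i0, ne_eq, Fin.mk.injEq]
  exact fun hc => h (Fin.ext (by omega))

lemma i1_inj {k l : Fin m} (h : k ≠ l) : i1 k ≠ i1 l := by
  simp only [i1, ne_eq, Fin.mk.injEq]
  exact fun hc => h (Fin.ext (by omega))

/-- `c j` commutes with `pA k` when `j` is not one of the pair indices. -/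
lemma c_pA_comm (j : Fin (2*m)) (k : Fin m) (h0 : j ≠ i0 k) (h1 : j ≠ i1 k) :
    G.c j * pA G lam k = pA G lam k * G.c j := by
  unfold pA
  rw [mul_smul_comm, smul_mul_assoc]
  congr 1
  calc G.c j * (G.c (i0 k) * G.c (i1 k))
      = (G.c j * G.c (i0 k)) * G.c (i1 k) := by rw [mul_assoc]
    _ = -(G.c (i0 k) * G.c j) * G.c (i1 k) := by rw [G.anticomm _ _ h0]
    _ = -(G.c (i0 k) * (G.c j * G.c (i1 k))) := by rw [neg_mul, mul_assoc]
    _ = -(G.c (i0 k) * -(G.c (i1 k) * G.c j)) := by rw [G.anticomm _ _ h1]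
    _ = G.c (i0 k) * G.c (i1 k) * G.c j := by rw [mul_neg, neg_neg, mul_assoc]

lemma c_fA_comm (j : Fin (2*m)) (k : Fin m) (h0 : j ≠ i0 k) (h1 : j ≠ i1 k) :
    G.c j * fA G lam k = fA G lam k * G.c j := by
  unfold fA
  rw [mul_add, add_mul, mul_one, one_mul, c_pA_comm G lam j k h0 h1]

lemma pA_comm {k l : Fin m} (h : k ≠ l) :
    pA G lam k * pA G lam l = pA G lam l * pA G lam k := by
  have key : G.c (i0 k) * G.c (i1 k) * pA G lam l
      = pA G lam l * (G.c (i0 k) * G.c (i1 k)) := by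
    calc G.c (i0 k) * G.c (i1 k) * pA G lam l
        = G.c (i0 k) * (G.c (i1 k) * pA G lam l) := by rw [mul_assoc]
      _ = G.c (i0 k) * (pA G lam l * G.c (i1 k)) := by
          rw [c_pA_comm G lam _ _ ((i0_ne_i1 l k).symm) (i1_inj h)]
      _ = (G.c (i0 k) * pA G lam l) * G.c (i1 k) := by rw [mul_assoc]
      _ = pA G lam l * G.c (i0 k) * G.c (i1 k) := by
          rw [c_pA_comm G lam _ _ (i0_inj h) (i0_ne_i1 k l)]
      _ = pA G lam l * (G.c (i0 k) * G.c (i1 k)) := by rw [mul_assoc]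
  conv_lhs => rw [pA]
  rw [smul_mul_assoc, key, ← mul_smul_comm]
  rfl

lemma fA_comm {k l : Fin m} (h : k ≠ l) :
    fA G lam k * fA G lam l = fA G lam l * fA G lam k := by
  unfold fA
  simp only [mul_add, add_mul, one_mul, mul_one, pA_comm G lam h]
  abel

lemma pA_herm (k : Fin m) : (pA G lam k)ᴴ = pA G lam k := by
  unfold pA
  rw [conjTranspose_smul, conjTranspose_mul, (G.herm _).eq, (G.herm _).eq]
  rw [G.anticomm _ _ (Ne.symm (i0_ne_i1 k k))]
  rw [smul_neg, ← neg_smul]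
  congr 1
  simp [Complex.ext_iff]

lemma fA_herm (k : Fin m) : (fA G lam k)ᴴ = fA G lam k := by
  unfold fA
  rw [conjTranspose_add, conjTranspose_one, pA_herm]

lemma pA_sq (k : Fin m) (hl : lam k = 1 ∨ lam k = -1) :
    pA G lam k * pA G lam k = 1 := by
  unfold pA
  rw [smul_mul_smul_comm]
  have hcc : G.c (i0 k) * G.c (i1 k) * (G.c (i0 k) * G.c (i1 k)) = -1 := by
    calc G.c (i0 k) * G.c (i1 k) * (G.c (i0 k) * G.c (i1 k))
        = G.c (i0 k) * (G.c (i1 k) * G.c (i0 k)) * G.c (i1 k) := by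
          rw [mul_assoc, mul_assoc, mul_assoc]
      _ = G.c (i0 k) * (-(G.c (i0 k) * G.c (i1 k))) * G.c (i1 k) := by
          rw [G.anticomm _ _ (Ne.symm (i0_ne_i1 k k))]
      _ = -(G.c (i0 k) * G.c (i0 k) * (G.c (i1 k) * G.c (i1 k))) := by
          rw [mul_neg, neg_mul]
          congr 1
          rw [mul_assoc, mul_assoc, mul_assoc]
      _ = -1 := by rw [G.sq, G.sq, mul_one]
  rw [hcc]
  have hl2 : (lam k : ℂ) * (lam k : ℂ) = 1 := by
    rcases hl with h | h <;> rw [h] <;> norm_num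
  rw [smul_neg, ← neg_smul]
  have : -(Complex.I * ↑(lam k) * (Complex.I * ↑(lam k))) = 1 := by
    have : Complex.I * ↑(lam k) * (Complex.I * ↑(lam k))
        = (Complex.I * Complex.I) * ((lam k : ℂ) * (lam k : ℂ)) := by ring
    rw [this, Complex.I_mul_I, hl2]; norm_num
  rw [this, one_smul]

lemma fA_sq (k : Fin m) (hl : lam k = 1 ∨ lam k = -1) :
    fA G lam k * fA G lam k = (2:ℂ) • fA G lam k := by
  unfold fA
  rw [add_mul, mul_add, mul_add, pA_sq G lam k hl]
  simp only [one_mul, mul_one]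
  rw [two_smul]
  abel

/-- The key single-factor identity `c_{2k} (1 + A_k) = iλ_k c_{2k+1} (1 + A_k)`. -/
lemma c_fA_key (k : Fin m) (hl : lam k = 1 ∨ lam k = -1) :
    G.c (i0 k) * fA G lam k = (Complex.I * (lam k : ℂ)) • (G.c (i1 k) * fA G lam k) := by
  have hl2 : (lam k : ℂ) * (lam k : ℂ) = 1 := by
    rcases hl with h | h <;> rw [h] <;> norm_num
  unfold fA pA
  rw [mul_add, mul_one, mul_smul_comm, mul_add, mul_one, mul_smul_comm]
  have e1 : G.c (i0 k) * (G.c (i0 k) * G.c (i1 k)) = G.c (i1 k) := by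
    rw [← mul_assoc, G.sq, one_mul]
  have e2 : G.c (i1 k) * (G.c (i0 k) * G.c (i1 k)) = -G.c (i0 k) := by
    rw [← mul_assoc, G.anticomm _ _ (Ne.symm (i0_ne_i1 k k)), neg_mul, mul_assoc,
      G.sq, mul_one]
  rw [e1, e2, smul_add, smul_smul, smul_neg]
  have : Complex.I * ↑(lam k) * (Complex.I * ↑(lam k)) = -1 := by
    have h2 : Complex.I * ↑(lam k) * (Complex.I * ↑(lam k))
        = (Complex.I * Complex.I) * ((lam k : ℂ) * (lam k : ℂ)) := by ring
    rw [h2, Complex.I_mul_I, hl2]; norm_num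
  rw [this, neg_one_smul, neg_neg, add_comm]

lemma c_prod_comm (j : Fin (2*m)) :
    ∀ L : List (Fin m), (∀ k ∈ L, j ≠ i0 k ∧ j ≠ i1 k) →
    G.c j * (L.map (fA G lam)).prod = (L.map (fA G lam)).prod * G.c j
  | [], _ => by simp
  | k :: L, h => by
    simp only [List.map_cons, List.prod_cons]
    have h1 := h k (by simp)
    rw [← mul_assoc, c_fA_comm G lam j k h1.1 h1.2, mul_assoc,
      c_prod_comm j L (fun l hl => h l (by simp [hl])), mul_assoc]

lemma fA_prod_comm (k : Fin m) :
    ∀ L : List (Fin m), k ∉ L →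
    fA G lam k * (L.map (fA G lam)).prod = (L.map (fA G lam)).prod * fA G lam k
  | [], _ => by simp
  | l :: L, h => by
    simp only [List.map_cons, List.prod_cons]
    have hkl : k ≠ l := fun hc => h (hc ▸ (List.mem_cons_self : l ∈ l :: L))
    rw [← mul_assoc, fA_comm G lam hkl, mul_assoc,
      fA_prod_comm k L (fun hc => h (List.mem_cons_of_mem l hc)), mul_assoc]

lemma prod_herm : ∀ L : List (Fin m), L.Nodup →
    ((L.map (fA G lam)).prod)ᴴ = (L.map (fA G lam)).prod
  | [], _ => by simp
  | k :: L, h => by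
    simp only [List.map_cons, List.prod_cons]
    rw [conjTranspose_mul, prod_herm L (List.nodup_cons.mp h).2, fA_herm,
      ← fA_prod_comm G lam k L (List.nodup_cons.mp h).1]

lemma prod_sq (hl : ∀ k, lam k = 1 ∨ lam k = -1) : ∀ L : List (Fin m), L.Nodup →
    (L.map (fA G lam)).prod * (L.map (fA G lam)).prod
      = ((2:ℂ)^L.length) • (L.map (fA G lam)).prod
  | [], _ => by simp
  | k :: L, h => by
    simp only [List.map_cons, List.prod_cons, List.length_cons]
    obtain ⟨hk, hnd⟩ := List.nodup_cons.mp h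
    calc fA G lam k * (L.map (fA G lam)).prod * (fA G lam k * (L.map (fA G lam)).prod)
        = fA G lam k * (fA G lam k * (L.map (fA G lam)).prod) * (L.map (fA G lam)).prod := by
          rw [mul_assoc, ← mul_assoc ((L.map (fA G lam)).prod), ← fA_prod_comm G lam k L hk]
          rw [mul_assoc, mul_assoc, mul_assoc]
      _ = (fA G lam k * fA G lam k) * ((L.map (fA G lam)).prod * (L.map (fA G lam)).prod) := by
          rw [mul_assoc, mul_assoc, mul_assoc]
      _ = ((2:ℂ) • fA G lam k) * (((2:ℂ)^L.length) • (L.map (fA G lam)).prod) := by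
          rw [fA_sq G lam k (hl k), prod_sq hl L hnd]
      _ = ((2:ℂ)^(L.length+1)) • (fA G lam k * (L.map (fA G lam)).prod) := by
          rw [smul_mul_smul_comm, pow_succ, mul_comm ((2:ℂ)^L.length)]

lemma prod_trace : ∀ L : List (Fin m), L.Nodup →
    ((L.map (fA G lam)).prod).trace = (2:ℂ)^m
  | [], _ => by simp [Matrix.trace_one]
  | k :: L, h => by
    simp only [List.map_cons, List.prod_cons]
    obtain ⟨hk, hnd⟩ := List.nodup_cons.mp h
    have hcomm : G.c (i0 k) * (L.map (fA G lam)).prod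
        = (L.map (fA G lam)).prod * G.c (i0 k) := by
      refine c_prod_comm G lam _ L (fun l hl => ?_)
      have : k ≠ l := fun hc => hk (hc ▸ hl)
      exact ⟨i0_inj this, i0_ne_i1 k l⟩
    have hzero : (pA G lam k * (L.map (fA G lam)).prod).trace = 0 := by
      set Y := pA G lam k * (L.map (fA G lam)).prod with hY
      have hc : G.c (i0 k) * Y * G.c (i0 k) = -Y := by
        rw [hY, ← mul_assoc]
        have : G.c (i0 k) * pA G lam k = -(pA G lam k * G.c (i0 k)) := by
          unfold pA
          rw [mul_smul_comm, smul_mul_assoc, ← smul_neg]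
          congr 1
          rw [← mul_assoc, G.sq, one_mul, mul_assoc,
            G.anticomm _ _ (Ne.symm (i0_ne_i1 k k)), mul_neg, neg_neg, ← mul_assoc, G.sq,
            one_mul]
        rw [this, neg_mul, neg_mul]
        congr 1
        rw [mul_assoc (pA G lam k), hcomm, ← mul_assoc, mul_assoc, G.sq, mul_one]
      have h1 : (G.c (i0 k) * Y * G.c (i0 k)).trace = Y.trace := by
        rw [Matrix.trace_mul_cycle, ← mul_assoc, G.sq, one_mul]
      rw [hc, Matrix.trace_neg] at h1
      linear_combination -h1/2
    have : fA G lam k * (L.map (fA G lam)).prod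
        = (L.map (fA G lam)).prod + pA G lam k * (L.map (fA G lam)).prod := by
      unfold fA
      rw [add_mul, one_mul]
    rw [this, Matrix.trace_add, hzero, add_zero, prod_trace L hnd]

lemma c_prod_kill (hl : ∀ k, lam k = 1 ∨ lam k = -1) (k : Fin m) :
    ∀ L : List (Fin m), k ∈ L →
    G.c (i0 k) * (L.map (fA G lam)).prod
      = (Complex.I * (lam k : ℂ)) • (G.c (i1 k) * (L.map (fA G lam)).prod)
  | [], h => by simp at h
  | l :: L, h => by
    simp only [List.map_cons, List.prod_cons]
    by_cases hkl : k = l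
    · subst hkl
      rw [← mul_assoc, c_fA_key G lam k (hl k), smul_mul_assoc, mul_assoc]
    · have hmem : k ∈ L := by
        rcases List.mem_cons.mp h with h1 | h1
        · exact absurd h1 hkl
        · exact h1
      rw [← mul_assoc, c_fA_comm G lam _ l (i0_inj hkl) (i0_ne_i1 k l), mul_assoc,
        c_prod_kill hl k L hmem, mul_smul_comm]
      congr 1
      rw [← mul_assoc, ← c_fA_comm G lam _ l (Ne.symm (i0_ne_i1 l k)) (i1_inj hkl),
        mul_assoc]

/-- The normalized standard Gaussian state built from family `G`. -/
def rhoG : Mat m := ((2:ℂ)^m)⁻¹ • ((List.finRange m).map (fA G lam)).prod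

lemma two_pow_ne : ((2:ℂ)^m) ≠ 0 := pow_ne_zero m two_ne_zero

lemma rhoG_herm : (rhoG G lam)ᴴ = rhoG G lam := by
  unfold rhoG
  rw [conjTranspose_smul, prod_herm G lam _ (List.nodup_finRange m)]
  congr 1
  simp [Complex.ext_iff]

lemma rhoG_sq (hl : ∀ k, lam k = 1 ∨ lam k = -1) :
    rhoG G lam * rhoG G lam = rhoG G lam := by
  unfold rhoG
  rw [smul_mul_smul_comm, prod_sq G lam hl _ (List.nodup_finRange m), List.length_finRange,
    smul_smul]
  congr 1
  field_simp

lemma rhoG_psd (hl : ∀ k, lam k = 1 ∨ lam k = -1) : (rhoG G lam).PosSemidef := by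
  have : rhoG G lam = (rhoG G lam)ᴴ * rhoG G lam := by
    rw [rhoG_herm, rhoG_sq G lam hl]
  rw [this]
  exact Matrix.posSemidef_conjTranspose_mul_self _

lemma rhoG_trace : (rhoG G lam).trace = 1 := by
  unfold rhoG
  rw [Matrix.trace_smul, prod_trace G lam _ (List.nodup_finRange m)]
  simp [smul_eq_mul, inv_mul_cancel₀ (two_pow_ne (m := m))]

lemma ilam_sq (k : Fin m) (hl : lam k = 1 ∨ lam k = -1) :
    (Complex.I * (lam k : ℂ)) * (Complex.I * (lam k : ℂ)) = -1 := by
  have hl2 : (lam k : ℂ) * (lam k : ℂ) = 1 := by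
    rcases hl with h | h <;> rw [h] <;> norm_num
  have h2 : Complex.I * ↑(lam k) * (Complex.I * ↑(lam k))
      = (Complex.I * Complex.I) * ((lam k : ℂ) * (lam k : ℂ)) := by ring
  rw [h2, Complex.I_mul_I, hl2]; norm_num

lemma rhoG_kill (hl : ∀ k, lam k = 1 ∨ lam k = -1) (k : Fin m) :
    G.c (i0 k) * rhoG G lam
      = (Complex.I * (lam k : ℂ)) • (G.c (i1 k) * rhoG G lam) := by
  unfold rhoG
  rw [mul_smul_comm, c_prod_kill G lam hl k _ (List.mem_finRange k), mul_smul_comm,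
    smul_comm]

lemma sum_range_pair {M : Type*} [AddCommMonoid M] (f : ℕ → M) :
    ∀ q : ℕ, ∑ j ∈ Finset.range (2*q), f j = ∑ k ∈ Finset.range q, (f (2*k) + f (2*k+1))
  | 0 => by simp
  | q+1 => by
    rw [Finset.sum_range_succ, Nat.mul_succ, Finset.sum_range_succ, Finset.sum_range_succ,
      sum_range_pair f q, add_assoc]

lemma rhoG_kill_entry (hl : ∀ k, lam k = 1 ∨ lam k = -1)
    (u v u' v' : Fin (2^m)) :
    ∑ j : Fin (2*m), (G.c j * rhoG G lam) u v * (G.c j * rhoG G lam) u' v' = 0 := by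
  set f : ℕ → ℂ := fun j => if h : j < 2*m then
      (G.c ⟨j,h⟩ * rhoG G lam) u v * (G.c ⟨j,h⟩ * rhoG G lam) u' v' else 0 with hf
  have h1 : ∑ j : Fin (2*m), (G.c j * rhoG G lam) u v * (G.c j * rhoG G lam) u' v'
      = ∑ j : Fin (2*m), f j.val := by
    refine Finset.sum_congr rfl (fun j _ => ?_)
    rw [hf]
    simp only [j.isLt, dif_pos, Fin.eta]
  rw [h1, Fin.sum_univ_eq_sum_range f (2*m), sum_range_pair f m]
  refine Finset.sum_eq_zero (fun k hk => ?_)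
  have hkm : k < m := Finset.mem_range.mp hk
  have h2k : 2*k < 2*m := by omega
  have h2k1 : 2*k+1 < 2*m := by omega
  rw [hf]
  simp only [h2k, h2k1, dif_pos]
  have e0 : (⟨2*k, h2k⟩ : Fin (2*m)) = i0 ⟨k, hkm⟩ := rfl
  have e1 : (⟨2*k+1, h2k1⟩ : Fin (2*m)) = i1 ⟨k, hkm⟩ := rfl
  rw [e0, e1, rhoG_kill G lam hl ⟨k, hkm⟩]
  simp only [Matrix.smul_apply, smul_eq_mul]
  have := ilam_sq lam ⟨k, hkm⟩ (hl ⟨k, hkm⟩)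
  set z := (G.c (i1 ⟨k, hkm⟩) * rhoG G lam) u v
  set w := (G.c (i1 ⟨k, hkm⟩) * rhoG G lam) u' v'
  linear_combination z * w * this

end Pairs

lemma gauss_kill_entry (F : MajoranaFamily m) (R : Matrix (Fin (2*m)) (Fin (2*m)) ℝ)
    (hR : Rᵀ * R = 1) (lam : Fin m → ℝ) (hl : ∀ k, lam k = 1 ∨ lam k = -1)
    (u v u' v' : Fin (2^m)) :
    ∑ i : Fin (2*m), (F.c i * rhoG (tildeFamily F R hR) lam) u v *
      (F.c i * rhoG (tildeFamily F R hR) lam) u' v' = 0 := by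
  set G := tildeFamily F R hR with hG
  set ρ := rhoG G lam with hρ
  set a : Fin (2*m) → ℂ := fun i => (F.c i * ρ) u v with ha
  set b : Fin (2*m) → ℂ := fun i => (F.c i * ρ) u' v' with hb
  have hone : R * Rᵀ = 1 := mul_eq_one_comm.mp hR
  have hGc : ∀ j, G.c j * ρ = ∑ i, (R i j : ℂ) • (F.c i * ρ) := by
    intro j
    show (∑ i, (R i j : ℂ) • F.c i) * ρ = _
    rw [Finset.sum_mul]
    exact Finset.sum_congr rfl (fun i _ => smul_mul_assoc _ _ _)
  have h0 := rhoG_kill_entry G lam hl u v u' v'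
  have h1 : ∑ j : Fin (2*m), (G.c j * ρ) u v * (G.c j * ρ) u' v'
      = ∑ j : Fin (2*m), ∑ i, ∑ i', ((R i j : ℂ) * (R i' j : ℂ)) * (a i * b i') := by
    refine Finset.sum_congr rfl (fun j _ => ?_)
    rw [hGc j, Matrix.sum_apply, Matrix.sum_apply, Finset.sum_mul_sum]
    refine Finset.sum_congr rfl (fun i _ => Finset.sum_congr rfl (fun i' _ => ?_))
    simp only [Matrix.smul_apply, smul_eq_mul, ha, hb]
    ring
  have h2 : ∑ j : Fin (2*m), ∑ i, ∑ i', ((R i j : ℂ) * (R i' j : ℂ)) * (a i * b i')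
      = ∑ i, ∑ i', (∑ j, (R i j : ℂ) * (R i' j : ℂ)) * (a i * b i') := by
    rw [Finset.sum_comm]
    refine Finset.sum_congr rfl (fun i _ => ?_)
    rw [Finset.sum_comm]
    refine Finset.sum_congr rfl (fun i' _ => ?_)
    rw [Finset.sum_mul]
  have h3 : ∀ i i' : Fin (2*m), (∑ j, (R i j : ℂ) * (R i' j : ℂ))
      = if i = i' then 1 else 0 := by
    intro i i'
    have : ∑ j, R i j * R i' j = (R * Rᵀ) i i' := by
      simp [Matrix.mul_apply, Matrix.transpose_apply]
    have h4 : ∑ j, (R i j : ℂ) * (R i' j : ℂ) = ((R * Rᵀ) i i' : ℝ) := by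
      rw [← this]; push_cast; rfl
    rw [h4, hone, Matrix.one_apply]
    split <;> simp
  rw [h1, h2] at h0
  simp only [h3, ite_mul, one_mul, zero_mul] at h0
  simpa [Finset.sum_ite_eq, ha, hb] using h0

def pprod (n : ℕ) (B : Fin n → Mat m) : MatN m n := fun x y => ∏ l, B l (x l) (y l)

lemma tpow_eq_pprod (n : ℕ) (A : Mat m) : tpow n A = pprod n (fun _ => A) := rfl

lemma embed_eq_pprod (n : ℕ) (a : Fin n) (C : Mat m) :
    embedAt n a C = pprod n (fun l => if l = a then C else 1) := by
  funext x y
  unfold embedAt pprod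
  rw [← Finset.mul_prod_erase Finset.univ _ (Finset.mem_univ a)]
  simp only [if_pos rfl]
  congr 1
  refine Finset.prod_congr rfl (fun l hl => ?_)
  rw [if_neg (Finset.mem_erase.mp hl).1, Matrix.one_apply]

lemma pprod_mul (n : ℕ) (B B' : Fin n → Mat m) :
    pprod n B * pprod n B' = pprod n (fun l => B l * B' l) := by
  funext x y
  rw [Matrix.mul_apply]
  show ∑ z : Fin n → Fin (2^m), (∏ l, B l (x l) (z l)) * ∏ l, B' l (z l) (y l)
      = ∏ l, (B l * B' l) (x l) (y l)
  have : ∀ l, (B l * B' l) (x l) (y l) = ∑ t, B l (x l) t * B' l t (y l) := by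
    intro l; rw [Matrix.mul_apply]
  simp only [this]
  rw [Fintype.prod_sum (fun l t => B l (x l) t * B' l t (y l))]
  refine Finset.sum_congr rfl (fun z _ => ?_)
  rw [← Finset.prod_mul_distrib]

lemma tpow_mul (n : ℕ) (A B : Mat m) : tpow n (A * B) = tpow n A * tpow n B := by
  rw [tpow_eq_pprod, tpow_eq_pprod, tpow_eq_pprod, pprod_mul]

lemma tpow_conjTranspose (n : ℕ) (A : Mat m) : (tpow n A)ᴴ = tpow n Aᴴ := by
  funext x y
  simp only [Matrix.conjTranspose_apply, tpow]
  rw [star_prod]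

lemma tpow_trace (n : ℕ) (A : Mat m) : (tpow n A).trace = A.trace ^ n := by
  unfold Matrix.trace tpow
  simp only [Matrix.diag_apply]
  rw [Finset.sum_pow']
  rfl

lemma lambdaKL_kill (F : MajoranaFamily m) (n : ℕ) (a b : Fin n) (hab : a ≠ b) (A : Mat m)
    (hA : ∀ u v u' v', ∑ j : Fin (2*m), (F.c j * A) u v * (F.c j * A) u' v' = 0) :
    LambdaKL F n a b * tpow n A = 0 := by
  unfold LambdaKL
  rw [Matrix.sum_mul]
  funext x y
  rw [Matrix.sum_apply]
  have hb : b ∈ Finset.univ.erase a := Finset.mem_erase.mpr ⟨Ne.symm hab, Finset.mem_univ b⟩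
  have key : ∀ j : Fin (2*m), (embedAt n a (F.c j) * embedAt n b (F.c j) * tpow n A) x y
      = (F.c j * A) (x a) (y a) * (F.c j * A) (x b) (y b) *
        ∏ l ∈ (Finset.univ.erase a).erase b, A (x l) (y l) := by
    intro j
    rw [embed_eq_pprod, embed_eq_pprod, tpow_eq_pprod, pprod_mul, pprod_mul]
    show ∏ l, ((if l = a then F.c j else 1) * (if l = b then F.c j else 1) * A) (x l) (y l)
        = _
    rw [← Finset.mul_prod_erase Finset.univ _ (Finset.mem_univ a),
      ← Finset.mul_prod_erase _ _ hb]
    have e1 : ((if a = a then F.c j else 1) * (if a = b then F.c j else 1) * A)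
        = F.c j * A := by
      rw [if_pos rfl, if_neg hab, mul_one]
    have e2 : ((if b = a then F.c j else 1) * (if b = b then F.c j else 1) * A)
        = F.c j * A := by
      rw [if_pos rfl, if_neg (Ne.symm hab), one_mul]
    rw [e1, e2]
    have e3 : ∏ l ∈ (Finset.univ.erase a).erase b,
        ((if l = a then F.c j else 1) * (if l = b then F.c j else 1) * A) (x l) (y l)
        = ∏ l ∈ (Finset.univ.erase a).erase b, A (x l) (y l) := by
      refine Finset.prod_congr rfl (fun l hl => ?_)
      obtain ⟨hlb, hla', -⟩ : l ≠ b ∧ l ≠ a ∧ True := by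
        have h1 := Finset.mem_erase.mp hl
        have h2 := Finset.mem_erase.mp h1.2
        exact ⟨h1.1, h2.1, trivial⟩
      rw [if_neg hla', if_neg hlb, one_mul, one_mul]
    rw [e3, ← mul_assoc]
  simp only [key]
  rw [← Finset.sum_mul, hA, zero_mul, Matrix.zero_apply]

lemma ptr_tpow (n : ℕ) (hn : 1 ≤ n) (A : Mat m) (htr : A.trace = 1) :
    ptrRest n hn (tpow n A) = A := by
  obtain ⟨n', rfl⟩ : ∃ n', n = n' + 1 := ⟨n - 1, by omega⟩
  funext a b
  show ∑ g : Fin (n' + 1 - 1) → Fin (2^m), ∏ i : Fin (n'+1), A _ _ = A a b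
  have key : ∀ g : Fin (n' + 1 - 1) → Fin (2^m),
      (∏ i : Fin (n'+1),
        A (if h : i.val = 0 then a else g ⟨i.val - 1, by omega⟩)
          (if h : i.val = 0 then b else g ⟨i.val - 1, by omega⟩))
      = A a b * ∏ i : Fin n', A (g i) (g i) := by
    intro g
    rw [Fin.prod_univ_succ]
    congr 1
  simp only [key]
  rw [← Finset.mul_sum]
  have : ∑ x : Fin (n' + 1 - 1) → Fin (2^m), ∏ i : Fin n', A (x i) (x i)
      = (tpow n' A).trace := rfl
  rw [this, tpow_trace, htr, one_pow, mul_one]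

lemma ptr_linear (n : ℕ) (hn : 1 ≤ n) {k : ℕ} (p : Fin k → ℝ) (X : Fin k → MatN m n) :
    ptrRest n hn (∑ i, p i • X i) = ∑ i, p i • ptrRest n hn (X i) := by
  funext a b
  show ∑ g : Fin (n-1) → Fin (2^m), (∑ i, p i • X i) _ _ = _
  simp only [Matrix.sum_apply, Matrix.smul_apply]
  rw [Finset.sum_comm]
  refine Finset.sum_congr rfl (fun i _ => ?_)
  unfold ptrRest
  rw [Finset.smul_sum]


/-- A pure Gaussian standard state equals `rhoG` of the tilde family. -/
lemma gaussStd_eq (F : MajoranaFamily m) (R : Matrix (Fin (2*m)) (Fin (2*m)) ℝ)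
    (hR : Rᵀ * R = 1) (lam : Fin m → ℝ) :
    gaussStd F R lam = rhoG (tildeFamily F R hR) lam := by
  unfold gaussStd rhoG
  rw [List.ofFn_eq_map]
  rfl

lemma smul_psd {ι : Type*} [Fintype ι] [DecidableEq ι] {p : ℝ} (hp : 0 ≤ p)
    {M : Matrix ι ι ℂ} (hherm : Mᴴ = M) (hsq : M * M = M) : (p • M).PosSemidef := by
  have key : p • M = (Real.sqrt p • M)ᴴ * (Real.sqrt p • M) := by
    rw [Matrix.conjTranspose_smul, star_trivial, hherm, smul_mul_smul_comm,
      Real.mul_self_sqrt hp, hsq]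
  rw [key]
  exact Matrix.posSemidef_conjTranspose_mul_self _

/-- Every convex-Gaussian state `ρ = Σ_i p_i |ψ_i⟩⟨ψ_i|` has, for every `n ≥ 1`, the
`n`-Gaussian-symmetric extension `ρ^{(n)} = Σ_i p_i (|ψ_i⟩⟨ψ_i|)^{⊗n}`. -/
theorem stmt_19 (m : ℕ) (hm : 1 ≤ m) (F : MajoranaFamily m) (ρ : Mat m)
    (k : ℕ) (p : Fin k → ℝ) (g : Fin k → Mat m)
    (hp : ∀ i, 0 ≤ p i) (hsum : (∑ i, p i) = 1)
    (hg : ∀ i, IsPureGaussian F (g i)) (hρ : ρ = ∑ i, p i • g i)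
    (n : ℕ) (hn : 1 ≤ n) :
    IsState (∑ i, p i • tpow n (g i)) ∧
    ptrRest n hn (∑ i, p i • tpow n (g i)) = ρ ∧
    (∀ a b : Fin n, a ≠ b → LambdaKL F n a b * (∑ i, p i • tpow n (g i)) = 0) := by
  have hfacts : ∀ i, ((g i)ᴴ = g i) ∧ (g i * g i = g i) ∧ ((g i).trace = 1) ∧
      (∀ u v u' v', ∑ j : Fin (2*m), (F.c j * g i) u v * (F.c j * g i) u' v' = 0) := by
    intro i
    obtain ⟨R, lam, hR, hdet, hl, hgi⟩ := hg i
    have he : g i = rhoG (tildeFamily F R hR) lam := by rw [hgi, gaussStd_eq]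
    refine ⟨?_, ?_, ?_, ?_⟩
    · rw [he]; exact rhoG_herm _ _
    · rw [he]; exact rhoG_sq _ _ hl
    · rw [he]; exact rhoG_trace _ _
    · intro u v u' v'; rw [he]; exact gauss_kill_entry F R hR lam hl u v u' v'
  refine ⟨⟨?_, ?_⟩, ?_, ?_⟩
  · refine Finset.sum_induction _ Matrix.PosSemidef
      (fun a b ha hb => ha.add hb) Matrix.PosSemidef.zero (fun i _ => ?_)
    have h1 : (tpow n (g i))ᴴ = tpow n (g i) := by
      rw [tpow_conjTranspose, (hfacts i).1]
    have h2 : tpow n (g i) * tpow n (g i) = tpow n (g i) := by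
      rw [← tpow_mul, (hfacts i).2.1]
    exact smul_psd (hp i) h1 h2
  · rw [Matrix.trace_sum]
    have : ∀ i ∈ Finset.univ, (p i • tpow n (g i)).trace = ((p i : ℝ) : ℂ) := by
      intro i _
      rw [Matrix.trace_smul, tpow_trace, (hfacts i).2.2.1, one_pow]
      simp [Complex.real_smul]
    rw [Finset.sum_congr rfl this, ← Complex.ofReal_sum, hsum, Complex.ofReal_one]
  · rw [ptr_linear, hρ]
    refine Finset.sum_congr rfl (fun i _ => ?_)
    rw [ptr_tpow n hn (g i) (hfacts i).2.2.1]
  · intro a b hab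
    rw [Finset.mul_sum]
    refine Finset.sum_eq_zero (fun i _ => ?_)
    rw [mul_smul_comm, lambdaKL_kill F n a b hab (g i) (hfacts i).2.2.2, smul_zero]


end
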